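/- Let (Ω, Σ, μ) be a measure space, A ∈ Σ with μ(A) > 0, and T a bounded operator on L¹(Ω). Suppose B₀ ⊆ A satisfies 0 < μ(B₀) < ∞, ‖T(χ_{B₀}/μ(B₀))‖ > ‖T_A‖ − ε, and ‖χ_{B₀} · T(χ_{B₀}/μ(B₀))‖ < ε. Then ‖Id_A + T_A‖ ≥ ‖χ_{B₀}/μ(B₀) + T(χ_{B₀}/μ(B₀))‖ > 1 + ‖T_A‖ − 3ε. -/

import Mathlib

open MeasureTheory ENNReal

variable {Ω : Type*} [MeasurableSpace Ω]

/-- The subspace `L¹(A)` of `L¹(μ)`: functions vanishing a.e. off `A`. -/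
noncomputable def LoneSub (μ : Measure Ω) (A : Set Ω) : Submodule ℝ (Lp ℝ 1 μ) where
  carrier := {f | ∀ᵐ x ∂μ, x ∉ A → f x = 0}
  zero_mem' := by
    simp only [Set.mem_setOf_eq]
    filter_upwards [Lp.coeFn_zero ℝ 1 μ] with x hx _
    simpa using hx
  add_mem' := by
    intro f g hf hg
    have : ∀ᵐ x ∂μ, x ∉ A → ((f + g : Lp ℝ 1 μ) : Ω → ℝ) x = 0 := by
      filter_upwards [Lp.coeFn_add f g, hf, hg] with x hx h1 h2 hxA
      rw [hx]
      simp [h1 hxA, h2 hxA]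
    exact this
  smul_mem' := by
    intro c f hf
    have : ∀ᵐ x ∂μ, x ∉ A → ((c • f : Lp ℝ 1 μ) : Ω → ℝ) x = 0 := by
      filter_upwards [Lp.coeFn_smul c f, hf] with x hx h1 hxA
      rw [hx]
      simp [h1 hxA]
    exact this

/-- The normalized indicator function `χ_B / μ(B)` as an element of `L¹(μ)`. -/
noncomputable def normInd (μ : Measure Ω) {B : Set Ω} (hB : MeasurableSet B)
    (hBfin : μ B ≠ ∞) : Lp ℝ 1 μ :=
  indicatorConstLp 1 hB hBfin ((μ B).toReal)⁻¹

/-- The key lower estimate for `‖Id_A + T_A‖` from a normalized indicator that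
`T` almost shifts off its support. -/
theorem stmt9 (μ : Measure Ω) {A : Set Ω} (hA : MeasurableSet A) (hA0 : 0 < μ A)
    (T : Lp ℝ 1 μ →L[ℝ] Lp ℝ 1 μ) {B₀ : Set Ω} (hB₀A : B₀ ⊆ A)
    (hB₀m : MeasurableSet B₀) (hB₀0 : 0 < μ B₀) (hB₀fin : μ B₀ ≠ ∞) {ε : ℝ}
    (h1 : ‖T (normInd μ hB₀m hB₀fin)‖ > ‖T.comp (LoneSub μ A).subtypeL‖ - ε)
    (h2 : ∫ x in B₀, |(T (normInd μ hB₀m hB₀fin) : Ω → ℝ) x| ∂μ < ε) :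
    ‖(LoneSub μ A).subtypeL + T.comp (LoneSub μ A).subtypeL‖
        ≥ ‖normInd μ hB₀m hB₀fin + T (normInd μ hB₀m hB₀fin)‖ ∧
      ‖normInd μ hB₀m hB₀fin + T (normInd μ hB₀m hB₀fin)‖
        > 1 + ‖T.comp (LoneSub μ A).subtypeL‖ - 3 * ε := by
  set f := normInd μ hB₀m hB₀fin with hf_def
  set g := T f with hg_def
  set c : ℝ := ((μ B₀).toReal)⁻¹ with hc_def
  have htoReal_pos : 0 < (μ B₀).toReal := ENNReal.toReal_pos hB₀0.ne' hB₀fin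
  have hc_pos : 0 < c := inv_pos.mpr htoReal_pos
  have hf_coe : ⇑f =ᵐ[μ] B₀.indicator fun _ => c := indicatorConstLp_coeFn
  -- f ∈ LoneSub
  have hf_mem : f ∈ LoneSub μ A := by
    filter_upwards [hf_coe] with x hx hxA
    rw [hx, Set.indicator_of_notMem (fun hxB => hxA (hB₀A hxB))]
  -- norm of f is 1
  have hf_norm : ‖f‖ = 1 := by
    rw [hf_def, normInd, norm_indicatorConstLp one_ne_zero one_ne_top]
    simp only [Real.norm_eq_abs, abs_of_pos hc_pos]
    rw [ENNReal.toReal_one, one_div_one, Real.rpow_one]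
    rw [abs_of_pos (inv_pos.mpr htoReal_pos)]
    exact inv_mul_cancel₀ htoReal_pos.ne'
  -- integrability
  have hf_int : Integrable f μ := L1.integrable_coeFn f
  have hg_int : Integrable g μ := L1.integrable_coeFn g
  -- norms as integrals
  have hg_norm : ‖g‖ = ∫ x, ‖(g : Ω → ℝ) x‖ ∂μ := L1.norm_eq_integral_norm g
  -- ∫ over B₀ᶜ of ‖f‖ = 0
  have hfc0 : ∫ x in B₀ᶜ, ‖(f : Ω → ℝ) x‖ ∂μ = 0 := by
    have : ∫ x in B₀ᶜ, ‖(f : Ω → ℝ) x‖ ∂μ = ∫ x in B₀ᶜ, (0 : ℝ) ∂μ := by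
      refine setIntegral_congr_ae hB₀m.compl ?_
      filter_upwards [hf_coe] with x hx hxc
      rw [hx, Set.indicator_of_notMem hxc, norm_zero]
    rw [this, integral_zero]
  -- ∫ over B₀ of ‖f‖ = 1
  have hfB1 : ∫ x in B₀, ‖(f : Ω → ℝ) x‖ ∂μ = 1 := by
    have h := integral_add_compl hB₀m hf_int.norm
    have hfull : ∫ x, ‖(f : Ω → ℝ) x‖ ∂μ = 1 := by
      rw [← L1.norm_eq_integral_norm, hf_norm]
    rw [hfc0, add_zero] at h
    rw [h, hfull]
  -- ∫ over B₀ᶜ of ‖g‖ = ‖g‖ - ∫_{B₀} ‖g‖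
  have hgsplit := integral_add_compl hB₀m hg_int.norm
  -- rewrite h2 in terms of norm
  have h2' : ∫ x in B₀, ‖(g : Ω → ℝ) x‖ ∂μ < ε := by
    simpa [Real.norm_eq_abs] using h2
  -- norm of f + g as integral
  have hsum_norm : ‖f + g‖ = ∫ x, ‖(f : Ω → ℝ) x + (g : Ω → ℝ) x‖ ∂μ := by
    rw [L1.norm_eq_integral_norm]
    refine integral_congr_ae ?_
    filter_upwards [Lp.coeFn_add f g] with x hx
    rw [hx]; rfl
  have hsum_int : Integrable (fun x => ‖(f : Ω → ℝ) x + (g : Ω → ℝ) x‖) μ :=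
    (hf_int.add hg_int).norm
  have hsum_split := integral_add_compl hB₀m hsum_int
  -- lower bound on B₀
  have hlow1 : ∫ x in B₀, ‖(f : Ω → ℝ) x‖ ∂μ - ∫ x in B₀, ‖(g : Ω → ℝ) x‖ ∂μ
      ≤ ∫ x in B₀, ‖(f : Ω → ℝ) x + (g : Ω → ℝ) x‖ ∂μ := by
    rw [← integral_sub hf_int.norm.integrableOn hg_int.norm.integrableOn]
    refine integral_mono (hf_int.norm.integrableOn.sub hg_int.norm.integrableOn)
      hsum_int.integrableOn (fun x => ?_)
    have := norm_add_le ((f : Ω → ℝ) x + (g : Ω → ℝ) x) (-(g : Ω → ℝ) x)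
    simp only [add_neg_cancel_right, norm_neg] at this
    linarith
  -- lower bound on B₀ᶜ
  have hlow2 : ∫ x in B₀ᶜ, ‖(g : Ω → ℝ) x‖ ∂μ - ∫ x in B₀ᶜ, ‖(f : Ω → ℝ) x‖ ∂μ
      ≤ ∫ x in B₀ᶜ, ‖(f : Ω → ℝ) x + (g : Ω → ℝ) x‖ ∂μ := by
    rw [← integral_sub hg_int.norm.integrableOn hf_int.norm.integrableOn]
    refine integral_mono (hg_int.norm.integrableOn.sub hf_int.norm.integrableOn)
      hsum_int.integrableOn (fun x => ?_)
    have := norm_add_le ((f : Ω → ℝ) x + (g : Ω → ℝ) x) (-(f : Ω → ℝ) x)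
    simp only [norm_neg] at this
    have h' : (f : Ω → ℝ) x + (g : Ω → ℝ) x + -(f : Ω → ℝ) x = (g : Ω → ℝ) x := by ring
    rw [h'] at this
    linarith
  -- second inequality
  have key : ‖f + g‖ > 1 + ‖T.comp (LoneSub μ A).subtypeL‖ - 3 * ε := by
    rw [hsum_norm, ← hsum_split]
    have : ‖g‖ > ‖T.comp (LoneSub μ A).subtypeL‖ - ε := h1
    linarith [hlow1, hlow2, hfB1, hfc0, hgsplit, hg_norm]
  refine ⟨?_, key⟩
  -- first inequality: operator norm bound
  have happ : ((LoneSub μ A).subtypeL + T.comp (LoneSub μ A).subtypeL) ⟨f, hf_mem⟩ = f + g := rfl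
  have hF_norm : ‖(⟨f, hf_mem⟩ : LoneSub μ A)‖ = 1 := hf_norm
  calc ‖normInd μ hB₀m hB₀fin + T (normInd μ hB₀m hB₀fin)‖
      = ‖((LoneSub μ A).subtypeL + T.comp (LoneSub μ A).subtypeL) ⟨f, hf_mem⟩‖ := by rw [happ]
    _ ≤ ‖(LoneSub μ A).subtypeL + T.comp (LoneSub μ A).subtypeL‖ * ‖(⟨f, hf_mem⟩ : LoneSub μ A)‖ :=
        ContinuousLinearMap.le_opNorm _ _
    _ = ‖(LoneSub μ A).subtypeL + T.comp (LoneSub μ A).subtypeL‖ := by rw [hF_norm, mul_one]
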